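/- Let (V, {H p}_{p∈ℤ}, Q) be a simple polarized pure ℚ-Hodge structure of weight w (all data and laws spelled out as in the context) which is CY with Hodge line H m (m the largest index with H m ≠ 0 and dim_ℂ H m = 1). Let γ be a Hodge automorphism of V whose complexification acts on H m by a scalar α ∈ ℂ with |α| = 1, and assume there is a finitely generated ℤ-submodule Λ ⊆ V spanning V over ℚ with γ(Λ) = Λ. Then γ is of finite order. -/

import Mathlib

open TensorProduct

set_option maxHeartbeats 1000000
set_option synthInstance.maxHeartbeats 400000

section Helpers

variable {V : Type*} [AddCommGroup V] [Module ℚ V]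

lemma one_tmul_eq_zero [FiniteDimensional ℚ V] {x : V} (h : (1:ℂ) ⊗ₜ[ℚ] x = 0) : x = 0 := by
  set b := Module.finBasis ℚ V
  set bC := b.baseChange ℂ with hbC
  have h2 := congrArg bC.repr h
  rw [map_zero] at h2
  have h3 : ∀ i, ((b.repr x i : ℚ) : ℂ) = 0 := by
    intro i
    have h4 := DFunLike.congr_fun h2 i
    rw [hbC, Module.Basis.baseChange_repr_tmul] at h4
    simpa [Algebra.smul_def] using h4
  have h5 : b.repr x = 0 := by
    ext i
    exact_mod_cast h3 i
  have := congrArg b.repr.symm h5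
  simpa using this

lemma baseChange_ker {W : Type*} [AddCommGroup W] [Module ℚ W]
    (f : V →ₗ[ℚ] W) :
    LinearMap.ker (f.baseChange ℂ) = (LinearMap.ker f).baseChange ℂ := by
  have h1 : f.baseChange ℂ = TensorProduct.AlgebraTensorModule.lTensor ℂ ℂ f := by
    apply LinearMap.ext
    intro t
    induction t using TensorProduct.induction_on with
    | zero => simp
    | tmul z x => simp
    | add a b ha hb => rw [map_add, map_add, ha, hb]
  rw [h1, Module.Flat.ker_lTensor_eq ℂ ℂ f]
  apply le_antisymm
  · rintro _ ⟨t, rfl⟩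
    induction t using TensorProduct.induction_on with
    | zero => simp
    | tmul z x =>
      rw [TensorProduct.AlgebraTensorModule.lTensor_tmul]
      exact Submodule.tmul_mem_baseChange_of_mem z x.2
    | add a b ha hb => rw [map_add]; exact Submodule.add_mem _ ha hb
  · rw [Submodule.baseChange]
    rintro _ ⟨t, rfl⟩
    refine ⟨t, ?_⟩
    induction t using TensorProduct.induction_on with
    | zero => simp
    | tmul z x => simp
    | add a b ha hb => rw [map_add, map_add, ha, hb]

end Helpers


/-- The torsion conclusion of the Claim inside the proof of Lemma 2.17: a Hodge
automorphism of a simple polarized pure ℚ-Hodge structure of CY type which acts on the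
Hodge line by a scalar of norm one and preserves a full integral lattice has finite
order. -/
theorem hodge_automorphism_is_torsion
    (V : Type*) [AddCommGroup V] [Module ℚ V] [FiniteDimensional ℚ V]
    (w : ℤ)
    -- the Hodge decomposition of V_ℂ := ℂ ⊗[ℚ] V
    (H : ℤ → Submodule ℂ (ℂ ⊗[ℚ] V))
    (hHfin : {p : ℤ | H p ≠ ⊥}.Finite)
    (hHdirect : DirectSum.IsInternal H)
    -- the conjugation involution induced by complex conjugation on the first factor
    (c : (ℂ ⊗[ℚ] V) →ₗ[ℚ] (ℂ ⊗[ℚ] V))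
    (hc : ∀ (z : ℂ) (v : V), c (z ⊗ₜ[ℚ] v) = (starRingEnd ℂ) z ⊗ₜ[ℚ] v)
    (hcH : ∀ p : ℤ, ((H p).restrictScalars ℚ).map c = (H (w - p)).restrictScalars ℚ)
    -- the polarization form and its ℂ-bilinear extension
    (Q : V →ₗ[ℚ] V →ₗ[ℚ] ℚ)
    (hQsymm : ∀ x y : V, Q y x = (-1 : ℚ) ^ w * Q x y)
    (QC : (ℂ ⊗[ℚ] V) →ₗ[ℂ] (ℂ ⊗[ℚ] V) →ₗ[ℂ] ℂ)
    (hQC : ∀ x y : V, QC ((1 : ℂ) ⊗ₜ[ℚ] x) ((1 : ℂ) ⊗ₜ[ℚ] y) = (Q x y : ℂ))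
    (hQorth : ∀ p p' : ℤ, p + p' ≠ w → ∀ u ∈ H p, ∀ u' ∈ H p', QC u u' = 0)
    (hQpos : ∀ p : ℤ, ∀ v ∈ H p, v ≠ 0 →
      ∃ r : ℝ, 0 < r ∧ Complex.I ^ (2 * p - w) * QC v (c v) = (r : ℂ))
    -- simplicity: the only rational Hodge substructures are 0 and V
    (hsimple : ∀ N : Submodule ℚ V,
      N.baseChange ℂ = ⨆ p : ℤ, N.baseChange ℂ ⊓ H p → N = ⊥ ∨ N = ⊤)
    -- CY condition: m is the largest index with H m ≠ 0 and H m is a line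
    (m : ℤ) (hm : H m ≠ ⊥) (hmtop : ∀ p : ℤ, m < p → H p = ⊥)
    (hmline : Module.finrank ℂ (H m) = 1)
    -- a Hodge automorphism acting on the Hodge line by a scalar of norm one
    (γ : V ≃ₗ[ℚ] V)
    (hγH : ∀ p : ℤ, ∀ x ∈ H p, (γ.toLinearMap.baseChange ℂ) x ∈ H p)
    (α : ℂ) (hα : ‖α‖ = 1)
    (hγα : ∀ x ∈ H m, (γ.toLinearMap.baseChange ℂ) x = α • x)
    -- a γ-stable full integral lattice
    (Λ : Submodule ℤ V) (hΛfg : Λ.FG)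
    (hΛspan : Submodule.span ℚ (Λ : Set V) = ⊤)
    (hγΛ : ⇑γ '' (Λ : Set V) = (Λ : Set V)) :
    IsOfFinOrder γ := by
  classical
  set Γ : (ℂ ⊗[ℚ] V) →ₗ[ℂ] (ℂ ⊗[ℚ] V) := γ.toLinearMap.baseChange ℂ with hΓdef
  set E := LinearEquiv.ofBijective (DirectSum.coeLinearMap H) hHdirect with hE
  set π : ℤ → (ℂ ⊗[ℚ] V) →ₗ[ℂ] (ℂ ⊗[ℚ] V) := fun p =>
    (H p).subtype ∘ₗ (DirectSum.component ℂ ℤ (fun q => ↥(H q)) p) ∘ₗ E.symm.toLinearMap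
    with hπdef
  have hπ_apply : ∀ p u, π p u = ((E.symm u) p : ℂ ⊗[ℚ] V) := fun p u => rfl
  have hπ_mem : ∀ p u, π p u ∈ H p := fun p u => Submodule.coe_mem _
  have hπ_same : ∀ p u, u ∈ H p → π p u = u := by
    intro p u hu
    rw [hπ_apply, hHdirect.ofBijective_coeLinearMap_of_mem hu]
  have hπ_ne : ∀ p q u, u ∈ H q → q ≠ p → π p u = 0 := by
    intro p q u hu hqp
    rw [hπ_apply, hHdirect.ofBijective_coeLinearMap_of_mem_ne hqp hu]
    rfl
  have hπ_bot : ∀ p u, H p = ⊥ → π p u = 0 := by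
    intro p u hp
    have h1 := hπ_mem p u
    rw [hp] at h1
    simpa using h1
  set P : Finset ℤ := hHfin.toFinset with hP
  have hP_mem : ∀ p : ℤ, p ∈ P ↔ H p ≠ ⊥ := fun p => hHfin.mem_toFinset
  have hπ_sum : ∀ u, ∑ p ∈ P, π p u = u := by
    intro u
    have hx := DirectSum.sum_support_of (E.symm u)
    have hterm : ∀ p, π p u = E (DirectSum.of (fun q => ↥(H q)) p (E.symm u p)) := by
      intro p
      rw [show E (DirectSum.of (fun q => ↥(H q)) p (E.symm u p))
          = DirectSum.coeLinearMap H (DirectSum.of (fun q => ↥(H q)) p (E.symm u p)) from rfl,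
        DirectSum.coeLinearMap_of, hπ_apply]
    have hsub : (DFinsupp.support (E.symm u)) ⊆ P := by
      intro p hp
      rw [DFinsupp.mem_support_iff] at hp
      rw [hP_mem]
      intro hbot
      apply hp
      have h2 := hπ_bot p u hbot
      rw [hπ_apply] at h2
      exact Subtype.ext h2
    have h3 : ∑ p ∈ DFinsupp.support (E.symm u), π p u = u := by
      calc ∑ p ∈ DFinsupp.support (E.symm u), π p u
          = ∑ p ∈ DFinsupp.support (E.symm u),
              E (DirectSum.of (fun q => ↥(H q)) p (E.symm u p)) :=
            Finset.sum_congr rfl fun p _ => hterm p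
        _ = E (∑ p ∈ DFinsupp.support (E.symm u),
              DirectSum.of (fun q => ↥(H q)) p (E.symm u p)) := (map_sum E.toLinearMap _ _).symm
        _ = E (E.symm u) := by rw [hx]
        _ = u := E.apply_symm_apply u
    conv_rhs => rw [← h3]
    apply (Finset.sum_subset hsub ?_).symm
    intro p _ hp
    rw [DFinsupp.mem_support_iff, not_not] at hp
    rw [hπ_apply, hp]
    rfl
  have hπ_comm : ∀ (L : (ℂ ⊗[ℚ] V) →ₗ[ℂ] ℂ ⊗[ℚ] V), (∀ p x, x ∈ H p → L x ∈ H p) →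
      ∀ p u, π p (L u) = L (π p u) := by
    intro L hL p u
    have h1 : L u = ∑ q ∈ P, L (π q u) := by rw [← map_sum, hπ_sum]
    rw [h1, map_sum]
    by_cases hpP : p ∈ P
    · rw [Finset.sum_eq_single_of_mem p hpP]
      · exact hπ_same p _ (hL p _ (hπ_mem p u))
      · intro q _ hqp
        exact hπ_ne p q _ (hL q _ (hπ_mem q u)) hqp
    · have hbot : H p = ⊥ := by
        by_contra hne
        exact hpP ((hP_mem p).mpr hne)
      rw [Finset.sum_eq_zero, hπ_bot p u hbot, map_zero]
      intro q _
      exact hπ_bot p _ hbot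

  -- conjugation lemmas
  have hc_smul : ∀ (z : ℂ) u, c (z • u) = (starRingEnd ℂ) z • c u := by
    intro z u
    induction u using TensorProduct.induction_on with
    | zero => simp
    | tmul z' x =>
      rw [smul_tmul', smul_eq_mul, hc, hc, map_mul, smul_tmul', smul_eq_mul]
    | add a b ha hb => rw [smul_add, map_add, ha, hb, map_add, smul_add]
  have hc_c : ∀ u, c (c u) = u := by
    intro u
    induction u using TensorProduct.induction_on with
    | zero => simp
    | tmul z x => rw [hc, hc, Complex.conj_conj]
    | add a b ha hb => rw [map_add, map_add, ha, hb]
  have hc_mem : ∀ p u, u ∈ H p → c u ∈ H (w - p) := by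
    intro p u hu
    have h1 : c u ∈ ((H p).restrictScalars ℚ).map c := ⟨u, hu, rfl⟩
    rw [hcH p] at h1
    exact h1
  -- base change of γ
  have hΓ_tmul : ∀ (z : ℂ) (x : V), Γ (z ⊗ₜ[ℚ] x) = z ⊗ₜ[ℚ] (γ x) := by
    intro z x
    simp [hΓdef]
  have hΓc : ∀ u, Γ (c u) = c (Γ u) := by
    intro u
    induction u using TensorProduct.induction_on with
    | zero => simp
    | tmul z x => rw [hc, hΓ_tmul, hΓ_tmul, hc]
    | add a b ha hb => rw [map_add, map_add, map_add, map_add, ha, hb]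
  -- bilinear form lemmas
  have hQC_tmul : ∀ (z z' : ℂ) (x y : V),
      QC (z ⊗ₜ[ℚ] x) (z' ⊗ₜ[ℚ] y) = z * z' * ((Q x y : ℚ) : ℂ) := by
    intro z z' x y
    have h1 : z ⊗ₜ[ℚ] x = z • ((1:ℂ) ⊗ₜ[ℚ] x) := by rw [smul_tmul', smul_eq_mul, mul_one]
    have h2 : z' ⊗ₜ[ℚ] y = z' • ((1:ℂ) ⊗ₜ[ℚ] y) := by rw [smul_tmul', smul_eq_mul, mul_one]
    rw [h1, h2]
    simp only [map_smul, LinearMap.smul_apply, hQC, smul_eq_mul]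
    ring
  have hQCc : ∀ u v, QC (c u) (c v) = (starRingEnd ℂ) (QC u v) := by
    intro u v
    induction u using TensorProduct.induction_on with
    | zero => simp
    | tmul z x =>
      induction v using TensorProduct.induction_on with
      | zero => simp
      | tmul z' y =>
        rw [hc, hc, hQC_tmul, hQC_tmul, map_mul, map_mul, map_ratCast]
      | add a b ha hb => simp only [map_add, ha, hb]
    | add a b ha hb => simp only [map_add, LinearMap.add_apply, ha, hb]
  have hQCsymm : ∀ u v, QC v u = (-1:ℂ) ^ w * QC u v := by
    intro u v
    induction u using TensorProduct.induction_on with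
    | zero => simp
    | tmul z x =>
      induction v using TensorProduct.induction_on with
      | zero => simp
      | tmul z' y =>
        rw [hQC_tmul, hQC_tmul, hQsymm]
        push_cast
        ring
      | add a b ha hb => simp only [map_add, LinearMap.add_apply, ha, hb]; ring
    | add a b ha hb => simp only [map_add, LinearMap.add_apply, ha, hb]; ring
  -- component-wise pairing
  have hpair : ∀ u (p : ℤ) v, v ∈ H p → QC u (c v) = QC (π p u) (c v) := by
    intro u p v hv
    have hcv : c v ∈ H (w - p) := hc_mem p v hv
    conv_lhs => rw [← hπ_sum u]
    rw [map_sum, LinearMap.sum_apply]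
    by_cases hpP : p ∈ P
    · rw [Finset.sum_eq_single_of_mem p hpP]
      intro q _ hqp
      exact hQorth q (w - p) (by omega) _ (hπ_mem q u) _ hcv
    · have hbot : H p = ⊥ := by
        by_contra hne
        exact hpP ((hP_mem p).mpr hne)
      rw [hπ_bot p u hbot, map_zero, LinearMap.zero_apply]
      apply Finset.sum_eq_zero
      intro q hq
      have hqp : q ≠ p := fun h => hpP (h ▸ hq)
      exact hQorth q (w - p) (by omega) _ (hπ_mem q u) _ hcv
  -- Q is nondegenerate
  have hQnd : LinearMap.BilinForm.Nondegenerate Q := by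
    refine (LinearMap.IsRefl.nondegenerate_iff_separatingLeft (B := Q)
      (fun x y h => by rw [hQsymm, h, mul_zero])).mpr ?_
    intro x hx
    have h0 : ∀ u, QC ((1:ℂ) ⊗ₜ[ℚ] x) u = 0 := by
      intro u
      induction u using TensorProduct.induction_on with
      | zero => simp
      | tmul z y => rw [show (1:ℂ) ⊗ₜ[ℚ] x = (1:ℂ) ⊗ₜ[ℚ] x from rfl, hQC_tmul, hx y]; simp
      | add a b ha hb => rw [map_add, ha, hb, add_zero]
    have hcomp : ∀ p, π p ((1:ℂ) ⊗ₜ[ℚ] x) = 0 := by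
      intro p
      by_contra hne
      obtain ⟨r, hr, hre⟩ := hQpos p _ (hπ_mem p ((1:ℂ) ⊗ₜ[ℚ] x)) hne
      have h1 : QC ((1:ℂ) ⊗ₜ[ℚ] x) (c (π p ((1:ℂ) ⊗ₜ[ℚ] x)))
          = QC (π p ((1:ℂ) ⊗ₜ[ℚ] x)) (c (π p ((1:ℂ) ⊗ₜ[ℚ] x))) := hpair _ p _ (hπ_mem p _)
      rw [h0] at h1
      rw [← h1, mul_zero] at hre
      exact hr.ne' (by exact_mod_cast hre.symm)
    have hzero : (1:ℂ) ⊗ₜ[ℚ] x = 0 := by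
      conv_lhs => rw [← hπ_sum ((1:ℂ) ⊗ₜ[ℚ] x)]
      exact Finset.sum_eq_zero fun p _ => hcomp p
    exact one_tmul_eq_zero hzero
  -- the comparison endomorphism φ
  set ψ : V →ₗ[ℚ] Module.Dual ℚ V :=
    { toFun := fun x => (Q (γ x)) ∘ₗ (γ.toLinearMap)
      map_add' := by
        intro x y
        ext z
        simp [map_add]
      map_smul' := by
        intro q x
        ext z
        simp } with hψdef
  set φ : V →ₗ[ℚ] V := (LinearMap.BilinForm.toDual Q hQnd).symm.toLinearMap ∘ₗ ψ with hφdef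
  have hφQ : ∀ x y, Q (φ x) y = Q (γ x) (γ y) := by
    intro x y
    have h1 : Q ((LinearMap.BilinForm.toDual Q hQnd).symm (ψ x)) y = (ψ x) y :=
      LinearMap.BilinForm.apply_toDual_symm_apply (ψ x) y
    exact h1
  set φC : (ℂ ⊗[ℚ] V) →ₗ[ℂ] (ℂ ⊗[ℚ] V) := φ.baseChange ℂ with hφCdef
  have hφC_tmul : ∀ (z : ℂ) (x : V), φC (z ⊗ₜ[ℚ] x) = z ⊗ₜ[ℚ] (φ x) := by
    intro z x
    simp [hφCdef]
  have hφCQ : ∀ u v, QC (φC u) v = QC (Γ u) (Γ v) := by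
    intro u v
    induction u using TensorProduct.induction_on with
    | zero => simp
    | tmul z x =>
      induction v using TensorProduct.induction_on with
      | zero => simp
      | tmul z' y => rw [hφC_tmul, hΓ_tmul, hΓ_tmul, hQC_tmul, hQC_tmul, hφQ]
      | add a b ha hb => simp only [map_add, ha, hb]
    | add a b ha hb => simp only [map_add, LinearMap.add_apply, ha, hb]

  have hφC_mem : ∀ p u, u ∈ H p → φC u ∈ H p := by
    intro p u hu
    have hcomp : ∀ q, q ≠ p → π q (φC u) = 0 := by
      intro q hqp
      by_contra hne
      obtain ⟨r, hr, hre⟩ := hQpos q _ (hπ_mem q (φC u)) hne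
      have h1 : QC (φC u) (c (π q (φC u))) = QC (π q (φC u)) (c (π q (φC u))) :=
        hpair _ q _ (hπ_mem q _)
      have h2 : QC (φC u) (c (π q (φC u))) = 0 := by
        rw [hφCQ]
        exact hQorth p (w - q) (by omega) _ (hγH p u hu) _
          (hγH (w - q) _ (hc_mem q _ (hπ_mem q (φC u))))
      rw [h2] at h1
      rw [← h1, mul_zero] at hre
      exact hr.ne' (by exact_mod_cast hre.symm)
    have hsum : φC u = π p (φC u) := by
      conv_lhs => rw [← hπ_sum (φC u)]
      by_cases hpP : p ∈ P
      · exact Finset.sum_eq_single_of_mem p hpP (fun q _ hqp => hcomp q hqp)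
      · rw [Finset.sum_eq_zero (fun q hq => hcomp q (fun h => hpP (h ▸ hq))),
          hπ_bot p _ (by by_contra hne; exact hpP ((hP_mem p).mpr hne))]
    rw [hsum]
    exact hπ_mem p _
  obtain ⟨u₀, hu₀m, hu₀ne⟩ := (Submodule.ne_bot_iff _).mp hm
  have hu₀c : QC u₀ (c u₀) ≠ 0 := by
    obtain ⟨r, hr, hre⟩ := hQpos m u₀ hu₀m hu₀ne
    intro h0
    rw [h0, mul_zero] at hre
    exact hr.ne' (by exact_mod_cast hre.symm)
  have hφu₀ : φC u₀ = u₀ := by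
    obtain ⟨c₀, hc₀⟩ := (finrank_eq_one_iff_of_nonzero' (⟨u₀, hu₀m⟩ : H m)
      (by simpa using hu₀ne)).mp hmline ⟨φC u₀, hφC_mem m u₀ hu₀m⟩
    have hc₀' : c₀ • u₀ = φC u₀ := congrArg Subtype.val hc₀
    have key : QC (φC u₀) (c u₀) = QC u₀ (c u₀) := by
      rw [hφCQ, hγα u₀ hu₀m, hΓc, hγα u₀ hu₀m, hc_smul]
      have hαα : α * (starRingEnd ℂ) α = 1 := by
        rw [Complex.mul_conj, Complex.normSq_eq_norm_sq, hα]
        norm_num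
      simp only [map_smul, LinearMap.smul_apply, smul_eq_mul]
      linear_combination (QC u₀ (c u₀)) * hαα
    rw [← hc₀'] at key
    simp only [map_smul, LinearMap.smul_apply, smul_eq_mul] at key
    have hc₀1 : c₀ = 1 := by
      have := mul_right_cancel₀ hu₀c (key.trans (one_mul (QC u₀ (c u₀))).symm)
      exact this
    rw [← hc₀', hc₀1, one_smul]
  set K : V →ₗ[ℚ] V := φ - LinearMap.id with hKdef
  set KC : (ℂ ⊗[ℚ] V) →ₗ[ℂ] (ℂ ⊗[ℚ] V) := φC - LinearMap.id with hKCdef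
  have hKC : K.baseChange ℂ = KC := by
    rw [hKdef, hKCdef, LinearMap.baseChange_sub, LinearMap.baseChange_id, hφCdef]
  set N : Submodule ℚ V := LinearMap.ker K with hNdef
  have hNC : N.baseChange ℂ = LinearMap.ker KC := by
    rw [hNdef, ← baseChange_ker K, hKC]
  have hKCapply : ∀ x, KC x = φC x - x := by
    intro x
    rw [hKCdef, LinearMap.sub_apply, LinearMap.id_apply]
  have hKmem : ∀ p x, x ∈ H p → KC x ∈ H p := by
    intro p x hx
    rw [hKCapply]
    exact Submodule.sub_mem _ (hφC_mem p x hx) hx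
  have hNdecomp : N.baseChange ℂ = ⨆ p : ℤ, N.baseChange ℂ ⊓ H p := by
    apply le_antisymm
    · intro u hu
      have hker : KC u = 0 := by
        rw [hNC, LinearMap.mem_ker] at hu
        exact hu
      rw [show u = ∑ p ∈ P, π p u from (hπ_sum u).symm]
      apply Submodule.sum_mem
      intro p _
      apply Submodule.mem_iSup_of_mem p
      refine Submodule.mem_inf.mpr ⟨?_, hπ_mem p u⟩
      rw [hNC, LinearMap.mem_ker]
      have hcomm := hπ_comm KC hKmem p u
      rw [hker, map_zero] at hcomm
      exact hcomm.symm
    · exact iSup_le fun p => inf_le_left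
  rcases hsimple N hNdecomp with hbot | htop
  · exfalso
    have hmem : u₀ ∈ N.baseChange ℂ := by
      rw [hNC, LinearMap.mem_ker, hKCapply, hφu₀, sub_self]
    rw [hbot, Submodule.baseChange_bot] at hmem
    exact hu₀ne (by simpa using hmem)
  have hφ_id : ∀ x : V, φ x = x := by
    intro x
    have hx : x ∈ N := htop ▸ Submodule.mem_top
    rw [hNdef, LinearMap.mem_ker, hKdef, LinearMap.sub_apply, LinearMap.id_apply,
      sub_eq_zero] at hx
    exact hx
  have hQγ : ∀ x y, Q (γ x) (γ y) = Q x y := fun x y => by rw [← hφQ, hφ_id]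
  have hQCΓ : ∀ u v, QC (Γ u) (Γ v) = QC u v := by
    intro u v
    induction u using TensorProduct.induction_on with
    | zero => simp
    | tmul z x =>
      induction v using TensorProduct.induction_on with
      | zero => simp
      | tmul z' y => rw [hΓ_tmul, hΓ_tmul, hQC_tmul, hQC_tmul, hQγ]
      | add a b ha hb => simp only [map_add, ha, hb]
    | add a b ha hb => simp only [map_add, LinearMap.add_apply, ha, hb]

  -- the Hodge-theoretic positive definite Hermitian pairing
  set hh : (ℂ ⊗[ℚ] V) → (ℂ ⊗[ℚ] V) → ℂ := fun u v =>
    ∑ p ∈ P, Complex.I ^ (2 * p - w) * QC (π p u) (c (π p v)) with hhdef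
  have hh_add_l : ∀ u u' v, hh (u + u') v = hh u v + hh u' v := by
    intro u u' v
    rw [hhdef, ← Finset.sum_add_distrib]
    exact Finset.sum_congr rfl fun p _ => by rw [map_add, map_add, LinearMap.add_apply, mul_add]
  have hh_add_r : ∀ u v v', hh u (v + v') = hh u v + hh u v' := by
    intro u v v'
    rw [hhdef, ← Finset.sum_add_distrib]
    exact Finset.sum_congr rfl fun p _ => by rw [map_add, map_add, map_add, mul_add]
  have hh_smul_l : ∀ (z : ℂ) u v, hh (z • u) v = z * hh u v := by
    intro z u v
    rw [hhdef, Finset.mul_sum]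
    refine Finset.sum_congr rfl fun p _ => ?_
    simp only [map_smul, LinearMap.smul_apply, smul_eq_mul]
    ring
  have hh_smul_r : ∀ (z : ℂ) u v, hh u (z • v) = (starRingEnd ℂ) z * hh u v := by
    intro z u v
    rw [hhdef, Finset.mul_sum]
    refine Finset.sum_congr rfl fun p _ => ?_
    simp only [map_smul, hc_smul, smul_eq_mul]
    ring
  have hh_zero_r : ∀ u, hh u 0 = 0 := by
    intro u
    rw [hhdef]
    apply Finset.sum_eq_zero
    intro p _
    rw [map_zero, map_zero, map_zero, mul_zero]
  have hh_sub_l : ∀ u u' v, hh (u - u') v = hh u v - hh u' v := by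
    intro u u' v
    have h1 : u - u' = u + (-1:ℂ) • u' := by rw [neg_one_smul, ← sub_eq_add_neg]
    rw [h1, hh_add_l, hh_smul_l]
    ring
  have hh_sub_r : ∀ u v v', hh u (v - v') = hh u v - hh u v' := by
    intro u v v'
    have h1 : v - v' = v + (-1:ℂ) • v' := by rw [neg_one_smul, ← sub_eq_add_neg]
    rw [h1, hh_add_r, hh_smul_r]
    simp
    ring
  have hI4 : (Complex.I) ^ (4:ℤ) = 1 := by
    rw [show (4:ℤ) = ((4:ℕ):ℤ) from rfl, zpow_natCast, Complex.I_pow_four]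
  have hIper : ∀ (b t : ℤ), Complex.I ^ (b + 4*t) = Complex.I ^ b := by
    intro b t
    rw [zpow_add₀ Complex.I_ne_zero, zpow_mul, hI4, one_zpow, mul_one]
  have hI2 : Complex.I ^ (2:ℤ) = -1 := by
    rw [show (2:ℤ) = ((2:ℕ):ℤ) from rfl, zpow_natCast, Complex.I_sq]
  have hIm1 : ((-1:ℂ)) ^ w = Complex.I ^ (2*w) := by
    rw [zpow_mul, hI2]
  have hh_conj : ∀ u v, hh v u = (starRingEnd ℂ) (hh u v) := by
    intro u v
    rw [hhdef, map_sum]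
    refine Finset.sum_congr rfl fun p _ => ?_
    rw [map_mul, ← hQCc, hc_c]
    rw [hQCsymm (π p v) (c (π p u))]
    rw [map_zpow₀, Complex.conj_I]
    rw [show (-Complex.I) = Complex.I⁻¹ from by rw [Complex.inv_I], inv_zpow, ← zpow_neg]
    rw [hIm1]
    rw [show Complex.I ^ (-(2 * p - w)) * (Complex.I ^ (2*w) * QC (π p v) (c (π p u)))
        = Complex.I ^ (-(2 * p - w) + 2*w) * QC (π p v) (c (π p u)) from by
      rw [zpow_add₀ Complex.I_ne_zero]; ring]
    congr 1
    rw [show -(2 * p - w) + 2*w = (2 * p - w) + 4*(w - p) from by ring, hIper]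
  have hh_self : ∀ u, ∃ r : ℝ, 0 ≤ r ∧ hh u u = (r:ℂ) ∧ (u ≠ 0 → 0 < r) := by
    intro u
    have hchoice : ∀ p, ∃ rp : ℝ, 0 ≤ rp ∧
        Complex.I ^ (2*p - w) * QC (π p u) (c (π p u)) = (rp:ℂ) ∧ (π p u ≠ 0 → 0 < rp) := by
      intro p
      by_cases hz : π p u = 0
      · refine ⟨0, le_refl _, ?_, fun h => absurd hz h⟩
        rw [hz]
        simp
      · obtain ⟨r, hr, hre⟩ := hQpos p _ (hπ_mem p u) hz
        exact ⟨r, hr.le, hre, fun _ => hr⟩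
    choose rp hrp0 hrpe hrppos using hchoice
    refine ⟨∑ p ∈ P, rp p, Finset.sum_nonneg (fun p _ => hrp0 p), ?_, ?_⟩
    · rw [hhdef]
      push_cast
      exact Finset.sum_congr rfl fun p _ => hrpe p
    · intro hu
      have hex : ∃ p ∈ P, π p u ≠ 0 := by
        by_contra hall
        push_neg at hall
        exact hu (by rw [← hπ_sum u]; exact Finset.sum_eq_zero hall)
      obtain ⟨p₀, hp₀P, hp₀⟩ := hex
      exact Finset.sum_pos' (fun p _ => hrp0 p) ⟨p₀, hp₀P, hrppos p₀ hp₀⟩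
  have hh_Γ : ∀ u v, hh (Γ u) (Γ v) = hh u v := by
    intro u v
    rw [hhdef]
    refine Finset.sum_congr rfl fun p _ => ?_
    rw [hπ_comm Γ hγH p u, hπ_comm Γ hγH p v, ← hΓc, hQCΓ]
  have hh_cs : ∀ u v (ru rv : ℝ), hh u u = (ru:ℂ) → hh v v = (rv:ℂ) →
      ‖hh u v‖ ^ 2 ≤ ru * rv := by
    intro u v ru rv huu hvv
    have hru0 : 0 ≤ ru := by
      obtain ⟨r', hr'0, hr'e, _⟩ := hh_self u
      rw [huu] at hr'e
      have : ru = r' := by exact_mod_cast hr'e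
      linarith
    by_cases hv0 : v = 0
    · have h1 : hh u v = 0 := by rw [hv0, hh_zero_r]
      have h2 : rv = 0 := by
        have h3 : ((rv:ℝ):ℂ) = 0 := by rw [← hvv, hv0, hh_zero_r]
        exact_mod_cast h3
      rw [h1, h2]
      simp
    · obtain ⟨r', hr'0, hr'e, hr'pos⟩ := hh_self v
      have hrv : rv = r' := by rw [hvv] at hr'e; exact_mod_cast hr'e
      have hrvpos : 0 < rv := hrv ▸ hr'pos hv0
      set t := hh u v with htdef
      set z := t / (rv:ℂ) with hzdef
      obtain ⟨r'', hr''0, hr''e, _⟩ := hh_self (u - z • v)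
      have hexp : hh (u - z • v) (u - z • v)
          = (ru:ℂ) - (starRingEnd ℂ) z * t - z * (starRingEnd ℂ) t
            + z * (starRingEnd ℂ) z * (rv:ℂ) := by
        rw [hh_sub_l, hh_sub_r, hh_sub_r, hh_smul_l, hh_smul_r, hh_smul_r,
          hh_smul_l, hh_conj u v, huu, hvv]
        ring
      have hne : ((rv:ℝ):ℂ) ≠ 0 := by
        exact_mod_cast hrvpos.ne'
      have hkey : (r'':ℂ) * ((rv:ℝ):ℂ) = (ru:ℂ) * ((rv:ℝ):ℂ)
          - ((Complex.normSq t : ℝ):ℂ) := by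
        rw [← hr''e, hexp, hzdef, map_div₀, Complex.conj_ofReal]
        have h1 : t * (starRingEnd ℂ) t = ((Complex.normSq t : ℝ):ℂ) := Complex.mul_conj t
        field_simp
        linear_combination (-1:ℂ) * h1
      have hr''r : r'' * rv = ru * rv - Complex.normSq t := by exact_mod_cast hkey
      have hnn : (0:ℝ) ≤ r'' * rv := mul_nonneg hr''0 hrvpos.le
      rw [Complex.sq_norm]
      nlinarith [Complex.normSq_nonneg t]

  -- a ℤ-basis of the lattice
  haveI hfinΛ : Module.Finite ℤ ↥Λ := Module.Finite.iff_fg.mpr hΛfg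
  haveI : Module.IsTorsionFree ℤ V := Module.IsTorsionFree.of_smul_eq_zero fun r x h => by
    rw [← Int.cast_smul_eq_zsmul ℚ] at h
    rcases smul_eq_zero.mp h with h' | h'
    · exact Or.inl (by exact_mod_cast h')
    · exact Or.inr h'
  haveI hfreeΛ : Module.Free ℤ ↥Λ := Module.free_of_finite_type_torsion_free'
  set b : Module.Basis (Module.Free.ChooseBasisIndex ℤ ↥Λ) ℤ ↥Λ := Module.Free.chooseBasis ℤ ↥Λ
    with hbdef
  set e : Module.Free.ChooseBasisIndex ℤ ↥Λ → V := fun i => ((b i : ↥Λ) : V) with hedef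
  have he_mem : ∀ i, e i ∈ Λ := fun i => (b i).2
  have he_span : Submodule.span ℚ (Set.range e) = ⊤ := by
    rw [eq_top_iff, ← hΛspan, Submodule.span_le]
    intro x hx
    have h1 := b.sum_repr ⟨x, hx⟩
    have h3 : (x : V) = ∑ i, (b.repr ⟨x, hx⟩ i) • e i := by
      calc (x : V) = ((∑ i, b.repr ⟨x, hx⟩ i • b i : ↥Λ) : V) := by rw [h1]
        _ = ∑ i, (b.repr ⟨x, hx⟩ i) • e i := by
            rw [AddSubmonoidClass.coe_finset_sum]
            exact Finset.sum_congr rfl fun i _ => rfl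
    rw [SetLike.mem_coe, h3]
    apply Submodule.sum_mem
    intro i _
    rw [← Int.cast_smul_eq_zsmul ℚ]
    exact Submodule.smul_mem _ _ (Submodule.subset_span ⟨i, rfl⟩)
  have he_li : LinearIndependent ℚ e := by
    have h1 : LinearIndependent ℤ e := by
      have h2 := b.linearIndependent
      have h3 := h2.map' (Λ.subtype) (Submodule.ker_subtype Λ)
      exact h3
    exact (LinearIndependent.iff_fractionRing ℤ ℚ).mp h1
  set bQ : Module.Basis (Module.Free.ChooseBasisIndex ℤ ↥Λ) ℚ V := Module.Basis.mk he_li he_span.ge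
    with hbQdef
  set bC : Module.Basis (Module.Free.ChooseBasisIndex ℤ ↥Λ) ℂ (ℂ ⊗[ℚ] V) := bQ.baseChange ℂ
    with hbCdef
  haveI : FiniteDimensional ℂ (ℂ ⊗[ℚ] V) := Module.Finite.of_basis bC
  have hbCe : ∀ i, bC i = (1:ℂ) ⊗ₜ[ℚ] (e i) := by
    intro i
    rw [hbCdef, Module.Basis.baseChange_apply, hbQdef, Module.Basis.mk_apply]
  -- dual vectors with respect to hh
  set Φ : (ℂ ⊗[ℚ] V) →ₗ[ℂ] Module.Dual ℂ (ℂ ⊗[ℚ] V) :=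
    { toFun := fun y =>
        { toFun := fun x => hh x (c y)
          map_add' := fun x x' => hh_add_l x x' (c y)
          map_smul' := fun z x => by simpa using hh_smul_l z x (c y) }
      map_add' := fun y y' => by
        refine LinearMap.ext fun x => ?_
        simp only [LinearMap.coe_mk, AddHom.coe_mk, LinearMap.add_apply]
        rw [map_add, hh_add_r]
      map_smul' := fun z y => by
        refine LinearMap.ext fun x => ?_
        simp only [LinearMap.coe_mk, AddHom.coe_mk, RingHom.id_apply, LinearMap.smul_apply,
          smul_eq_mul]
        rw [hc_smul, hh_smul_r, Complex.conj_conj] } with hΦdef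
  have hΦ_apply : ∀ y x, Φ y x = hh x (c y) := fun y x => rfl
  have hΦ_inj : Function.Injective Φ := by
    rw [← LinearMap.ker_eq_bot]
    rw [Submodule.eq_bot_iff]
    intro y hy
    rw [LinearMap.mem_ker] at hy
    have h1 : hh (c y) (c y) = 0 := by
      have := congrArg (fun f : Module.Dual ℂ (ℂ ⊗[ℚ] V) => f (c y)) hy
      simpa [hΦ_apply] using this
    have h2 : c y = 0 := by
      by_contra hne
      obtain ⟨r, hr0, hre, hrpos⟩ := hh_self (c y)
      rw [h1] at hre
      have : r = 0 := by exact_mod_cast hre.symm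
      exact (hrpos hne).ne' this
    have := congrArg c h2
    rw [hc_c, map_zero] at this
    exact this
  have hΦ_surj : Function.Surjective Φ := by
    rw [← LinearMap.injective_iff_surjective_of_finrank_eq_finrank
      Subspace.dual_finrank_eq.symm]
    exact hΦ_inj
  have hdual : ∀ i, ∃ yi, ∀ x, hh x (c yi) = bC.coord i x := by
    intro i
    obtain ⟨y, hy⟩ := hΦ_surj (bC.coord i)
    exact ⟨y, fun x => by rw [← hy]; rfl⟩
  choose y hy using hdual

  -- lattice stability under powers of γ
  have hγΛ' : ∀ x ∈ Λ, γ x ∈ Λ := by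
    intro x hx
    have h1 : γ x ∈ ⇑γ '' (Λ : Set V) := ⟨x, hx, rfl⟩
    rwa [hγΛ] at h1
  have hpow_succ : ∀ (k : ℕ) (x : V), (γ ^ (k+1)) x = γ ((γ ^ k) x) := by
    intro k x
    rw [pow_succ']
    rfl
  have hγpow : ∀ (n : ℕ), ∀ x ∈ Λ, (γ ^ n) x ∈ Λ := by
    intro n
    induction n with
    | zero => intro x hx; simpa using hx
    | succ k ih =>
      intro x hx
      rw [show (k+1) = k + 1 from rfl, hpow_succ]
      exact hγΛ' _ (ih x hx)
  -- powers of the complexification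
  have hΓpow : ∀ (n : ℕ) (x : V), (Γ ^ n) ((1:ℂ) ⊗ₜ[ℚ] x) = (1:ℂ) ⊗ₜ[ℚ] ((γ ^ n) x) := by
    intro n
    induction n with
    | zero => intro x; simp
    | succ k ih =>
      intro x
      rw [pow_succ', Module.End.mul_apply, ih, hΓ_tmul, hpow_succ]
  have hh_Γpow : ∀ (n : ℕ) u v, hh ((Γ ^ n) u) ((Γ ^ n) v) = hh u v := by
    intro n
    induction n with
    | zero => intro u v; simp
    | succ k ih =>
      intro u v
      rw [pow_succ', Module.End.mul_apply, Module.End.mul_apply, hh_Γ]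
      exact ih u v
  -- integer matrix coefficients of the powers of γ
  set a : ℕ → Module.Free.ChooseBasisIndex ℤ ↥Λ → Module.Free.ChooseBasisIndex ℤ ↥Λ → ℤ :=
    fun n i j => b.repr ⟨(γ ^ n) (e j), hγpow n (e j) (he_mem j)⟩ i with hadef
  have ha_sum : ∀ n j, (γ ^ n) (e j) = ∑ i, (a n i j) • e i := by
    intro n j
    have h1 := b.sum_repr ⟨(γ ^ n) (e j), hγpow n (e j) (he_mem j)⟩
    calc (γ ^ n) (e j) = ((∑ i, b.repr ⟨(γ ^ n) (e j), hγpow n (e j) (he_mem j)⟩ i • b i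
        : ↥Λ) : V) := by rw [h1]
      _ = ∑ i, (a n i j) • e i := by
          rw [AddSubmonoidClass.coe_finset_sum]
          exact Finset.sum_congr rfl fun i _ => rfl
  have ha_sumC : ∀ n j, (Γ ^ n) (bC j) = ∑ i, ((a n i j : ℤ) : ℂ) • bC i := by
    intro n j
    rw [hbCe, hΓpow, ha_sum, tmul_sum]
    refine Finset.sum_congr rfl fun i _ => ?_
    rw [hbCe, Int.cast_smul_eq_zsmul]
    exact map_zsmul (TensorProduct.mk ℚ ℂ V 1) (a n i j) (e i)
  have ha_coord : ∀ n i j, ((a n i j : ℤ) : ℂ) = bC.coord i ((Γ ^ n) (bC j)) := by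
    intro n i j
    rw [ha_sumC, map_sum]
    simp only [Module.Basis.coord_apply, map_smul, Module.Basis.repr_self, Finsupp.smul_single,
      smul_eq_mul, mul_one, Finsupp.single_apply, Finset.sum_ite_eq']
    simp
  -- uniform bound on the coefficients
  have hbound : ∀ i j, ∃ M : ℤ, 0 ≤ M ∧ ∀ n, a n i j ∈ Finset.Icc (-M) M := by
    intro i j
    obtain ⟨rj, hrj0, hrje, _⟩ := hh_self (bC j)
    obtain ⟨si, hsi0, hsie, _⟩ := hh_self (c (y i))
    have habs : ∀ n, ((a n i j : ℝ)) ^ 2 ≤ rj * si := by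
      intro n
      have h1 : ((a n i j : ℤ) : ℂ) = hh ((Γ ^ n) (bC j)) (c (y i)) := by
        rw [ha_coord, hy]
      have h2 : hh ((Γ ^ n) (bC j)) ((Γ ^ n) (bC j)) = (rj : ℂ) := by rw [hh_Γpow, hrje]
      have h3 := hh_cs ((Γ ^ n) (bC j)) (c (y i)) rj si h2 hsie
      rw [← h1] at h3
      calc ((a n i j : ℝ)) ^ 2 = ‖((a n i j : ℤ) : ℂ)‖ ^ 2 := by
            rw [show ((a n i j : ℤ) : ℂ) = (((a n i j : ℤ) : ℝ) : ℂ) from by push_cast; rfl,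
              Complex.norm_real, Real.norm_eq_abs, sq_abs]
        _ ≤ rj * si := h3
    set Mij : ℤ := Int.ceil (rj * si) with hMijdef
    have hM0' : 0 ≤ Mij := Int.ceil_nonneg (le_trans (sq_nonneg _) (habs 0))
    refine ⟨Mij, hM0', ?_⟩
    intro n
    have h4 : ((a n i j) ^ 2 : ℤ) ≤ Mij := by
      have h5 : (((a n i j) ^ 2 : ℤ) : ℝ) ≤ rj * si := by push_cast; exact habs n
      exact_mod_cast le_trans h5 (Int.le_ceil _)
    have h6 : |a n i j| ≤ Mij := by
      by_cases ha0 : a n i j = 0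
      · rw [ha0]
        simpa using hM0'
      · have h7 : 1 ≤ |a n i j| := Int.one_le_abs ha0
        have h8 : |a n i j| ≤ |a n i j| * |a n i j| :=
          le_mul_of_one_le_left (abs_nonneg _) h7
        rw [abs_mul_abs_self] at h8
        calc |a n i j| ≤ a n i j * a n i j := h8
          _ = (a n i j)^2 := (sq _).symm
          _ ≤ Mij := h4
    rw [Finset.mem_Icc]
    exact abs_le.mp h6
  choose M hM0 hMmem using hbound
  -- pigeonhole
  set F : ℕ → (Module.Free.ChooseBasisIndex ℤ ↥Λ × Module.Free.ChooseBasisIndex ℤ ↥Λ) → ℤ :=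
    fun n p => a n p.1 p.2 with hFdef
  have hmaps : Set.MapsTo F Set.univ
      (Set.pi Set.univ (fun p => (Finset.Icc (-(M p.1 p.2)) (M p.1 p.2) : Set ℤ))) := by
    intro n _
    intro p _
    simpa [hFdef, Set.mem_Icc] using Finset.mem_Icc.mp (hMmem p.1 p.2 n)
  have hfin : (Set.pi Set.univ
      (fun p : (Module.Free.ChooseBasisIndex ℤ ↥Λ × Module.Free.ChooseBasisIndex ℤ ↥Λ) =>
        (Finset.Icc (-(M p.1 p.2)) (M p.1 p.2) : Set ℤ))).Finite :=
    Set.Finite.pi fun p => (Finset.Icc _ _).finite_toSet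
  obtain ⟨n₁, -, n₂, -, hne, heq⟩ :=
    Set.infinite_univ.exists_ne_map_eq_of_mapsTo hmaps hfin
  -- from equal coefficient matrices to equal powers
  have hkey : ∀ (n₁ n₂ : ℕ), n₁ < n₂ → F n₁ = F n₂ → IsOfFinOrder γ := by
    clear hne heq n₁ n₂
    intro n₁ n₂ hlt heq
    have hee : ∀ j, (γ ^ n₂) (e j) = (γ ^ n₁) (e j) := by
      intro j
      rw [ha_sum, ha_sum]
      refine Finset.sum_congr rfl fun i _ => ?_
      have := congrFun heq (i, j)
      simp only [hFdef] at this
      rw [this]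
    set d := n₂ - n₁ with hddef
    have hd0 : 0 < d := by omega
    have hfix : ∀ j, (γ ^ d) (e j) = e j := by
      intro j
      have h1 : (γ ^ n₁) ((γ ^ d) (e j)) = (γ ^ n₁) (e j) := by
        have h2 : (γ ^ n₁) ((γ ^ d) (e j)) = (γ ^ (n₁ + d)) (e j) := by
          rw [pow_add]
          rfl
        rw [h2, show n₁ + d = n₂ from by omega, hee]
      exact (γ ^ n₁).injective h1
    have hall : ∀ x : V, (γ ^ d) x = x := by
      have hker : ⊤ ≤ LinearMap.ker ((γ ^ d).toLinearMap - LinearMap.id) := by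
        rw [← he_span, Submodule.span_le]
        rintro _ ⟨j, rfl⟩
        rw [SetLike.mem_coe, LinearMap.mem_ker, LinearMap.sub_apply, LinearMap.id_apply,
          LinearEquiv.coe_coe, hfix, sub_self]
      intro x
      have h1 := hker (Submodule.mem_top : x ∈ ⊤)
      rw [LinearMap.mem_ker, LinearMap.sub_apply, LinearMap.id_apply, LinearEquiv.coe_coe,
        sub_eq_zero] at h1
      exact h1
    refine isOfFinOrder_iff_pow_eq_one.mpr ⟨d, hd0, ?_⟩
    refine DFunLike.ext _ _ fun x => ?_
    simpa using hall x
  rcases lt_or_gt_of_ne hne with hlt | hgt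
  · exact hkey n₁ n₂ hlt heq
  · exact hkey n₂ n₁ hgt heq.symm
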